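/- Assume p_γ > 0, let 0 = β₀ ≤ β₁ ≤ ⋯ ≤ β_K with K ≥ 1, let N ≥ 1, and write G_k := G(P_{β_{k−1}}, P_{β_k}) for k = 1,…,K and R_k := G(P_{β_{k−1}}, P_{β_{k+1}}) / (G(P_{β_{k−1}}, P_{β_k})·G(P_{β_k}, P_{β_{k+1}})) for k = 1,…,K−1 (all well-defined since each G is strictly positive). If G_k⁻² ≤ D for all k, where D ≥ 1, and 1/3 ≤ s ≤ 1, then (2/N)·Σ_{k=1}^{K}(G_k⁻² − 1) − (2/N)·Σ_{k=1}^{K−1}(R_k − 1) + (1 − s)/(s·N) ≤ 2·K·D/N. -/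

import Mathlib

open MeasureTheory Real

/-- The asymptotic relative mean-square error bound of Proposition 1: if the inverse
squared Bhattacharyya coefficients along the ladder are bounded by `D ≥ 1` and
`1/3 ≤ s ≤ 1`, then
`(2/N)·Σ_{k=1}^{K}(G_k⁻² − 1) − (2/N)·Σ_{k=1}^{K−1}(R_k − 1) + (1−s)/(s·N) ≤ 2KD/N`. -/
theorem relative_mse_bound
    {X : Type*} [MeasurableSpace X] (μ : Measure X) [SigmaFinite μ]
    (ρ₀ : X → ℝ) (hρ₀meas : Measurable ρ₀) (hρ₀nonneg : ∀ x, 0 ≤ ρ₀ x)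
    (hρ₀int : Integrable ρ₀ μ)
    (f : X → ℝ) (hfmeas : Measurable f) (γ : ℝ)
    (ρ : ℝ → X → ℝ) (hρ : ∀ β x, ρ β x = ρ₀ x * Real.exp (β * min (γ - f x) 0))
    (Z : ℝ → ℝ) (hZ : ∀ β, Z β = ∫ x, ρ β x ∂μ)
    (hZ₀pos : 0 < Z 0)
    (pγ : ℝ) (hpγ : pγ = (Z 0)⁻¹ * ∫ x in {x | f x ≤ γ}, ρ₀ x ∂μ)
    (hpγpos : 0 < pγ)
    (K : ℕ) (hK : 1 ≤ K) (N : ℕ) (hN : 1 ≤ N)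
    (β : ℕ → ℝ) (hβ0 : β 0 = 0) (hβmono : Monotone β)
    (G : ℝ → ℝ → ℝ)
    (hG : ∀ b b', G b b' = ∫ x, Real.sqrt ((ρ b x / Z b) * (ρ b' x / Z b')) ∂μ)
    (D : ℝ) (hD : 1 ≤ D)
    (hGD : ∀ k ∈ Finset.range K, (G (β k) (β (k + 1)))⁻¹ ^ 2 ≤ D)
    (s : ℝ) (hs : 1 / 3 ≤ s) (hs1 : s ≤ 1) :
    (2 / N) * (∑ k ∈ Finset.range K, ((G (β k) (β (k + 1)))⁻¹ ^ 2 - 1))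
    - (2 / N) * (∑ k ∈ Finset.range (K - 1),
        (G (β k) (β (k + 2)) / (G (β k) (β (k + 1)) * G (β (k + 1)) (β (k + 2))) - 1))
    + (1 - s) / (s * N)
    ≤ 2 * K * D / N := by
  have hNpos : (0:ℝ) < N := by exact_mod_cast hN
  have hGnn : ∀ b b', 0 ≤ G b b' := by
    intro b b'
    rw [hG]
    exact integral_nonneg fun x => Real.sqrt_nonneg _
  have hS1 : (∑ k ∈ Finset.range K, ((G (β k) (β (k + 1)))⁻¹ ^ 2 - 1)) ≤ K * (D - 1) := by
    calc (∑ k ∈ Finset.range K, ((G (β k) (β (k + 1)))⁻¹ ^ 2 - 1))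
        ≤ ∑ _k ∈ Finset.range K, (D - 1) :=
          Finset.sum_le_sum fun k hk => by linarith [hGD k hk]
      _ = K * (D - 1) := by simp [Finset.sum_const, mul_comm]; ring
  have hS2 : -((K:ℝ) - 1) ≤ ∑ k ∈ Finset.range (K - 1),
      (G (β k) (β (k + 2)) / (G (β k) (β (k + 1)) * G (β (k + 1)) (β (k + 2))) - 1) := by
    have hterm : ∀ k ∈ Finset.range (K - 1), (-1:ℝ) ≤
        G (β k) (β (k + 2)) / (G (β k) (β (k + 1)) * G (β (k + 1)) (β (k + 2))) - 1 := by
      intro k _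
      have := div_nonneg (hGnn (β k) (β (k+2)))
        (mul_nonneg (hGnn (β k) (β (k+1))) (hGnn (β (k+1)) (β (k+2))))
      linarith
    calc -((K:ℝ) - 1) = ∑ _k ∈ Finset.range (K - 1), (-1:ℝ) := by
          rw [Finset.sum_const]
          have h : ((K - 1 : ℕ):ℝ) = (K:ℝ) - 1 := by
            rw [Nat.cast_sub hK]; simp
          simp [h]
      _ ≤ _ := Finset.sum_le_sum hterm
  have hspos : (0:ℝ) < s := lt_of_lt_of_le (by norm_num) hs
  have hsN : (1 - s) / (s * N) ≤ 2 / N := by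
    rw [div_le_div_iff₀ (by positivity) hNpos]
    nlinarith
  have h2N : (0:ℝ) ≤ 2 / N := by positivity
  have h1 := mul_le_mul_of_nonneg_left hS1 h2N
  have h2 := mul_le_mul_of_nonneg_left hS2 h2N
  have hEq : 2 * (K:ℝ) * D / N = (2/N) * ((K:ℝ) * (D - 1)) + (2/N) * ((K:ℝ) - 1) + 2/N := by
    field_simp
    ring
  linarith
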